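/- For a polynomial f with coefficients in a ℚ-algebra, the Newton series expansion holds: f(x) = Σ_k (Δ^k f)(0) · C(x, k), where Δ is the forward difference operator (Δf)(x) = f(x+1) − f(x), and the sum is over 0 ≤ k ≤ deg f. -/

import Mathlib

section NewtonAux
open fwdDiff Finset Polynomial Function

lemma fwdDiff_eval (f : Polynomial ℚ) :
    Δ_[(1:ℚ)] (fun y => f.eval y) = fun y => (f.comp (X + 1) - f).eval y := by
  funext y
  simp [fwdDiff, eval_comp, add_comm]

lemma fwdDiff_zero_fun : Δ_[(1:ℚ)] (0 : ℚ → ℚ) = 0 := by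
  funext y; simp [fwdDiff]

lemma fwdDiff_iter_eval_eq_zero :
    ∀ d : ℕ, ∀ f : Polynomial ℚ, f.natDegree ≤ d → ∀ k, d < k →
      (Δ_[(1:ℚ)])^[k] (fun y => f.eval y) = 0 := by
  intro d
  induction d with
  | zero =>
    intro f hf k hk
    obtain ⟨m, rfl⟩ : ∃ m, k = m + 1 := ⟨k - 1, by omega⟩
    rw [iterate_succ_apply]
    have : (fun y : ℚ => f.eval y) = fun _ : ℚ => f.coeff 0 := by
      funext y
      conv_lhs => rw [Polynomial.eq_C_of_natDegree_le_zero hf]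
      simp
    rw [this, fwdDiff_const]
    have h0 : (fun _ : ℚ => (0:ℚ)) = (0 : ℚ → ℚ) := rfl
    rw [h0]
    exact Function.iterate_fixed fwdDiff_zero_fun m
  | succ d ih =>
    intro f hf k hk
    rcases Nat.lt_or_ge d f.natDegree with hd | hd
    · have hdf : f.natDegree = d + 1 := by omega
      have hne : f ≠ 0 := fun h => by simp [h] at hd
      set p := f.comp (X + 1) with hp
      have hq1 : (X + 1 : Polynomial ℚ).natDegree = 1 := by
        rw [← C_1]; exact natDegree_X_add_C 1
      have h2 : p.leadingCoeff = f.leadingCoeff := by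
        rw [hp, leadingCoeff_comp (by rw [hq1]; norm_num)]
        rw [← C_1, leadingCoeff_X_add_C]
        simp
      have hpne : p ≠ 0 := by
        intro h
        rw [h, leadingCoeff_zero, eq_comm, leadingCoeff_eq_zero] at h2
        exact hne h2
      have h1 : p.degree = f.degree := by
        rw [degree_eq_natDegree hpne, degree_eq_natDegree hne, hp, natDegree_comp, hq1, mul_one]
      have h3 : (p - f).degree < f.degree := h1 ▸ degree_sub_lt h1 hpne h2
      have hdeg : (p - f).natDegree ≤ d := by
        rcases eq_or_ne (p - f) 0 with h | h
        · simp [h]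
        · have := natDegree_lt_natDegree h h3
          omega
      obtain ⟨m, rfl⟩ : ∃ m, k = m + 1 := ⟨k - 1, by omega⟩
      rw [iterate_succ_apply, fwdDiff_eval]
      exact ih (p - f) hdeg m (by omega)
    · exact ih f hd k (lt_of_le_of_lt (Nat.le_succ d) hk)

noncomputable def nsc (n k : ℕ) : ℚ := (Δ_[(1:ℚ)])^[k] (fun y : ℚ => y ^ n) 0

lemma prod_cast_sub_eq (m k : ℕ) :
    ∏ i ∈ range k, ((m:ℚ) - (i:ℚ)) = (m.descFactorial k : ℚ) := by
  induction k with
  | zero => simp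
  | succ k ih =>
    rw [prod_range_succ, ih, Nat.descFactorial_succ]
    rcases le_or_gt k m with h | h
    · push_cast [Nat.cast_sub h]; ring
    · rw [Nat.descFactorial_eq_zero_iff_lt.mpr h]
      simp

lemma binom_val (m k : ℕ) :
    (1 / (k.factorial : ℚ)) * ∏ i ∈ range k, ((m:ℚ) - (i:ℚ)) = (m.choose k : ℚ) := by
  rw [prod_cast_sub_eq, Nat.descFactorial_eq_factorial_mul_choose]
  push_cast
  rw [one_div, inv_mul_cancel_left₀]
  exact_mod_cast k.factorial_ne_zero

lemma nsc_eq_zero {n k : ℕ} (h : n < k) : nsc n k = 0 := by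
  have h0 : (X ^ n : Polynomial ℚ).natDegree ≤ n := natDegree_X_pow_le _
  have := fwdDiff_iter_eval_eq_zero n (X ^ n) h0 k h
  have h1 : (fun y : ℚ => Polynomial.eval y (X ^ n)) = fun y : ℚ => y ^ n := by
    funext y; simp
  rw [h1] at this
  simpa [nsc] using congrFun this 0

lemma mono_nat (n m : ℕ) :
    ((m:ℚ))^n = ∑ k ∈ range (n+1), nsc n k *
      ((1 / (k.factorial : ℚ)) * ∏ i ∈ range k, ((m:ℚ) - (i:ℚ))) := by
  have H := shift_eq_sum_fwdDiff_iter (1:ℚ) (fun y : ℚ => y ^ n) m 0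
  simp only [zero_add, nsmul_eq_mul, mul_one] at H
  set N := max n m with hN
  have hL : ((m:ℚ))^n = ∑ k ∈ range (N+1), (m.choose k : ℚ) * nsc n k := by
    rw [H]
    rw [Finset.sum_subset (Finset.range_subset_range.mpr (by omega : m + 1 ≤ N + 1))]
    · exact Finset.sum_congr rfl fun k _ => by rfl
    · intro k _ hk
      simp only [Finset.mem_range, not_lt] at hk
      rw [Nat.choose_eq_zero_of_lt (by omega)]
      simp
  rw [hL]
  rw [Finset.sum_subset (Finset.range_subset_range.mpr (by omega : n + 1 ≤ N + 1))]
  · refine Finset.sum_congr rfl fun k _ => ?_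
    rw [binom_val, mul_comm]
  · intro k _ hk
    simp only [Finset.mem_range, not_lt] at hk
    rw [nsc_eq_zero (by omega)]
    simp

noncomputable def newtonPoly (n : ℕ) : Polynomial ℚ :=
  ∑ k ∈ range (n+1), C (nsc n k) *
    (C (1 / (k.factorial : ℚ)) * ∏ i ∈ range k, (X - C (i:ℚ)))

lemma X_pow_eq_newtonPoly (n : ℕ) : (X : Polynomial ℚ) ^ n = newtonPoly n := by
  apply eq_of_infinite_eval_eq
  apply Set.Infinite.mono (s := Set.range ((↑) : ℕ → ℚ))
  · rintro _ ⟨m, rfl⟩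
    show Polynomial.eval _ _ = Polynomial.eval _ _
    rw [newtonPoly]
    simp only [eval_pow, eval_X, eval_finset_sum, eval_mul, eval_C, eval_prod, eval_sub,
      eval_natCast]
    exact mono_nat n m
  · exact Set.infinite_range_of_injective Nat.cast_injective

variable (A : Type*) [CommRing A] [Algebra ℚ A]

lemma fwdDiff_pow_A (n k : ℕ) :
    (Δ_[(1:A)])^[k] (fun y : A => y ^ n) 0 = algebraMap ℚ A (nsc n k) := by
  rw [nsc, fwdDiff_iter_eq_sum_shift, fwdDiff_iter_eq_sum_shift, map_sum]
  refine Finset.sum_congr rfl fun j _ => ?_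
  rw [map_zsmul, map_pow]
  congr 2
  simp [nsmul_eq_mul]

lemma mono_A (n : ℕ) (x : A) :
    x ^ n = ∑ k ∈ range (n+1), algebraMap ℚ A (nsc n k) *
      (algebraMap ℚ A (1 / (k.factorial : ℚ)) * ∏ i ∈ range k, (x - (i : A))) := by
  have := congrArg (Polynomial.aeval x) (X_pow_eq_newtonPoly n)
  rw [map_pow, aeval_X, newtonPoly, map_sum] at this
  rw [this]
  refine Finset.sum_congr rfl fun k _ => ?_
  rw [map_mul, map_mul, aeval_C, aeval_C, map_prod]
  congr 1
  congr 1
  refine Finset.prod_congr rfl fun i _ => ?_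
  rw [map_sub, aeval_X, aeval_C, map_natCast]

theorem newton_series' (f : Polynomial A) (x : A) :
    f.eval x = ∑ k ∈ Finset.range (f.natDegree + 1),
      ((fwdDiff (1 : A))^[k] (fun y : A => f.eval y)) 0 *
        (algebraMap ℚ A (1 / k.factorial) * ∏ i ∈ Finset.range k, (x - (i : A))) := by
  set d := f.natDegree with hd
  have hfun : (fun y : A => f.eval y)
      = ∑ i ∈ range (d+1), (f.coeff i) • (fun y : A => y ^ i) := by
    funext y
    rw [Polynomial.eval_eq_sum_range]
    simp [Finset.sum_apply, smul_eq_mul]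
    rfl
  have hdiff : ∀ k, ((fwdDiff (1 : A))^[k] (fun y : A => f.eval y)) 0
      = ∑ i ∈ range (d+1), f.coeff i * algebraMap ℚ A (nsc i k) := by
    intro k
    rw [hfun, fwdDiff_iter_finset_sum]
    rw [Finset.sum_apply]
    refine Finset.sum_congr rfl fun i _ => ?_
    rw [fwdDiff_iter_const_smul, Pi.smul_apply, smul_eq_mul, fwdDiff_pow_A]
  calc f.eval x = ∑ i ∈ range (d+1), f.coeff i * x ^ i := by
        rw [Polynomial.eval_eq_sum_range]
    _ = ∑ i ∈ range (d+1), f.coeff i *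
          (∑ k ∈ range (d+1), algebraMap ℚ A (nsc i k) *
            (algebraMap ℚ A (1 / (k.factorial : ℚ)) * ∏ j ∈ range k, (x - (j : A)))) := by
        refine Finset.sum_congr rfl fun i hi => ?_
        rw [Finset.mem_range] at hi
        congr 1
        rw [mono_A A i x]
        rw [Finset.sum_subset (Finset.range_subset_range.mpr (by omega : i + 1 ≤ d + 1))]
        intro k _ hk
        rw [Finset.mem_range, not_lt] at hk
        rw [nsc_eq_zero (by omega), map_zero, zero_mul]
    _ = ∑ k ∈ range (d+1), (∑ i ∈ range (d+1), f.coeff i * algebraMap ℚ A (nsc i k)) *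
          (algebraMap ℚ A (1 / (k.factorial : ℚ)) * ∏ j ∈ range k, (x - (j : A))) := by
        simp_rw [Finset.mul_sum, Finset.sum_mul]
        rw [Finset.sum_comm]
        exact Finset.sum_congr rfl fun k _ => Finset.sum_congr rfl fun i _ => by ring
    _ = _ := by
        refine Finset.sum_congr rfl fun k _ => ?_
        rw [hdiff k]
end NewtonAux

open fwdDiff in
/-- Newton series expansion of a polynomial over a `ℚ`-algebra:
`f(x) = ∑_{k ≤ deg f} (Δ^k f)(0) · C(x,k)` where `C(x,k) = x(x-1)⋯(x-k+1)/k!`. -/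
theorem newton_series (A : Type*) [CommRing A] [Algebra ℚ A] (f : Polynomial A) (x : A) :
    f.eval x = ∑ k ∈ Finset.range (f.natDegree + 1),
      ((fwdDiff (1 : A))^[k] (fun y : A => f.eval y)) 0 *
        (algebraMap ℚ A (1 / k.factorial) * ∏ i ∈ Finset.range k, (x - (i : A))) :=
  newton_series' A f x
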